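/- arXiv:1012.1066 — 4 statements merged into one kernel-verified Lean document; each statement's English description precedes it below -/
import Mathlib

section
/- Let W_n be the symmetric group on [1,n] viewed as a Coxeter group of type A_{n-1} with simple reflections s_i = (i,i+1). Let λ be a partition of n, t_λ the column-reading standard λ-tableau (whose columns are consecutive integers), w ∈ W_n, and t = w·t_λ the λ-tableau obtained by applying w entrywise. For i ∈ [1,n-1], l(s_i w) > l(w) if and only if either col_t(i) < col_t(i+1), or col_t(i) = col_t(i+1) and row_t(i) < row_t(i+1). -/
noncomputable section

namespace WGTab

/-- The Coxeter length of a permutation of `Fin n`: the number of inversions. -/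
def invLength {n : ℕ} (w : Equiv.Perm (Fin n)) : ℕ :=
  (Finset.univ.filter fun p : Fin n × Fin n => p.1 < p.2 ∧ w p.2 < w p.1).card

/-- The cells of a Young diagram, as a type; a cell is a pair (row index, column index). -/
abbrev Cell (μ : YoungDiagram) : Type := {c : ℕ × ℕ // c ∈ μ}

/-- `tc` is the column-reading tableau `t_λ`: its entries are ordered by column, then by
row; equivalently its columns consist of consecutive integers, filled column by column. -/
def IsColReading {n : ℕ} {μ : YoungDiagram} (tc : Cell μ ≃ Fin n) : Prop :=
  ∀ c c' : Cell μ,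
    tc c < tc c' ↔ (c.1.2 < c'.1.2 ∨ (c.1.2 = c'.1.2 ∧ c.1.1 < c'.1.1))

/-- `tr` is the row-reading tableau `tab^λ`: its entries are ordered by row, then by
column; equivalently its rows consist of consecutive integers, filled row by row. -/
def IsRowReading {n : ℕ} {μ : YoungDiagram} (tr : Cell μ ≃ Fin n) : Prop :=
  ∀ c c' : Cell μ,
    tr c < tr c' ↔ (c.1.1 < c'.1.1 ∨ (c.1.1 = c'.1.1 ∧ c.1.2 < c'.1.2))

/-- A standard tableau: entries increase along rows and down columns. -/
def IsStdTab {n : ℕ} {μ : YoungDiagram} (t : Cell μ ≃ Fin n) : Prop :=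
  ∀ c c' : Cell μ,
    ((c.1.1 = c'.1.1 ∧ c.1.2 < c'.1.2) → t c < t c') ∧
    ((c.1.2 = c'.1.2 ∧ c.1.1 < c'.1.1) → t c < t c')

/-- The row index of the entry `i` in the tableau `t`. -/
def rowOf {n : ℕ} {μ : YoungDiagram} (t : Cell μ ≃ Fin n) (i : Fin n) : ℕ := (t.symm i).1.1

/-- The column index of the entry `i` in the tableau `t`. -/
def colOf {n : ℕ} {μ : YoungDiagram} (t : Cell μ ≃ Fin n) (i : Fin n) : ℕ := (t.symm i).1.2

/-- The permutation `w` with `t = w · t_λ` (where `tc` plays the role of `t_λ`). -/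
def wOf {n : ℕ} {μ : YoungDiagram} (tc t : Cell μ ≃ Fin n) : Equiv.Perm (Fin n) :=
  tc.symm.trans t

/-- The left weak order on the symmetric group: `u ≤_L w` iff `l(wu⁻¹) = l(w) - l(u)`. -/
def WkLeP {n : ℕ} (u w : Equiv.Perm (Fin n)) : Prop :=
  invLength (w * u⁻¹) + invLength u = invLength w

/-- Strict left weak order. -/
def WkLtP {n : ℕ} (u w : Equiv.Perm (Fin n)) : Prop := WkLeP u w ∧ u ≠ w


lemma swap_lt_swap_iff {n : ℕ} {a b : Fin n} (hab : (a : ℕ) + 1 = (b : ℕ))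
    {u v : Fin n} (huv : u ≠ v) (hnb : ¬(u = b ∧ v = a)) :
    Equiv.swap a b v < Equiv.swap a b u ↔ ((u = a ∧ v = b) ∨ v < u) := by
  rw [Equiv.swap_apply_def, Equiv.swap_apply_def]
  split_ifs <;> simp only [Fin.ext_iff, Fin.lt_def, not_and, ne_eq] at * <;> omega

lemma invLength_swap_mul_of_lt {n : ℕ} (w : Equiv.Perm (Fin n)) {a b : Fin n}
    (hab : (a : ℕ) + 1 = (b : ℕ)) (h : w⁻¹ a < w⁻¹ b) :
    invLength (Equiv.swap a b * w) = invLength w + 1 := by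
  classical
  unfold invLength
  have hset : (Finset.univ.filter fun p : Fin n × Fin n =>
        p.1 < p.2 ∧ (Equiv.swap a b * w) p.2 < (Equiv.swap a b * w) p.1)
      = insert (w⁻¹ a, w⁻¹ b)
        (Finset.univ.filter fun p : Fin n × Fin n => p.1 < p.2 ∧ w p.2 < w p.1) := by
    ext ⟨x, y⟩
    simp only [Finset.mem_filter]
    simp only [Finset.mem_insert, Finset.mem_filter, Finset.mem_univ, true_and,
      Equiv.Perm.mul_apply, Prod.mk.injEq]
    constructor
    · rintro ⟨hxy, hlt⟩
      have hne : w x ≠ w y := fun hh => absurd (w.injective hh) (ne_of_lt hxy)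
      have hnb : ¬(w x = b ∧ w y = a) := by
        rintro ⟨h1, h2⟩
        have hx : x = w⁻¹ b := by rw [← h1]; simp
        have hy : y = w⁻¹ a := by rw [← h2]; simp
        rw [hx, hy] at hxy
        exact absurd hxy (not_lt.mpr (le_of_lt h))
      rcases (swap_lt_swap_iff hab hne hnb).mp hlt with ⟨h1, h2⟩ | hlt'
      · left
        constructor
        · rw [← h1]; simp
        · rw [← h2]; simp
      · exact Or.inr ⟨hxy, hlt'⟩
    · rintro (⟨hx, hy⟩ | ⟨hxy, hlt⟩)
      · subst hx; subst hy
        refine ⟨h, ?_⟩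
        simp only [Equiv.Perm.inv_def, Equiv.apply_symm_apply]
        rw [Equiv.swap_apply_left, Equiv.swap_apply_right]
        exact Fin.lt_def.mpr (by omega)
      · refine ⟨hxy, ?_⟩
        have hne : w x ≠ w y := fun hh => absurd (w.injective hh) (ne_of_lt hxy)
        have hnb : ¬(w x = b ∧ w y = a) := by
          rintro ⟨h1, h2⟩
          have hx : x = w⁻¹ b := by rw [← h1]; simp
          have hy : y = w⁻¹ a := by rw [← h2]; simp
          rw [hx, hy] at hxy
          exact absurd hxy (not_lt.mpr (le_of_lt h))
        exact (swap_lt_swap_iff hab hne hnb).mpr (Or.inr hlt)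
  rw [hset, Finset.card_insert_of_notMem]
  simp only [Finset.mem_filter, Finset.mem_univ, true_and, not_and]
  intro _
  simp only [Equiv.Perm.inv_def, Equiv.apply_symm_apply]
  exact not_lt.mpr (le_of_lt (Fin.lt_def.mpr (by omega)))

lemma invLength_swap_mul_gt_iff {n : ℕ} (w : Equiv.Perm (Fin n)) {a b : Fin n}
    (hab : (a : ℕ) + 1 = (b : ℕ)) :
    invLength (Equiv.swap a b * w) > invLength w ↔ w⁻¹ a < w⁻¹ b := by
  constructor
  · intro hgt
    by_contra hnlt
    have hne : w⁻¹ a ≠ w⁻¹ b := fun hh => by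
      have : a = b := w⁻¹.injective hh
      exact absurd (congrArg Fin.val this) (by omega)
    have hba : w⁻¹ b < w⁻¹ a := lt_of_le_of_ne (not_lt.mp hnlt) (Ne.symm hne)
    have h2 : (Equiv.swap a b * w)⁻¹ a < (Equiv.swap a b * w)⁻¹ b := by
      simp only [mul_inv_rev, Equiv.Perm.mul_apply, Equiv.swap_inv]
      rw [Equiv.swap_apply_left, Equiv.swap_apply_right]
      exact hba
    have := invLength_swap_mul_of_lt (Equiv.swap a b * w) hab h2
    rw [← mul_assoc, Equiv.swap_mul_self, one_mul] at this
    omega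
  · intro h
    have := invLength_swap_mul_of_lt w hab h
    omega

/-- `l(s_i w) > l(w)` iff the entry `i` of `t = w · t_λ` lies in an earlier
column than `i+1`, or in the same column and an earlier row.  (Entries are 0-indexed:
the paper's entries `1, …, n` correspond to `0, …, n-1` here.) -/
theorem stmt2 (n : ℕ) (μ : YoungDiagram) (hcard : μ.cells.card = n)
    (tc : Cell μ ≃ Fin n) (htc : IsColReading tc)
    (w : Equiv.Perm (Fin n)) (i : ℕ) (hi : i + 1 < n) :
    invLength (Equiv.swap ⟨i, Nat.lt_of_succ_lt hi⟩ ⟨i + 1, hi⟩ * w) > invLength w ↔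
      (colOf (tc.trans w) ⟨i, Nat.lt_of_succ_lt hi⟩ < colOf (tc.trans w) ⟨i + 1, hi⟩ ∨
        (colOf (tc.trans w) ⟨i, Nat.lt_of_succ_lt hi⟩ = colOf (tc.trans w) ⟨i + 1, hi⟩ ∧
          rowOf (tc.trans w) ⟨i, Nat.lt_of_succ_lt hi⟩ < rowOf (tc.trans w) ⟨i + 1, hi⟩)) := by
  set a : Fin n := ⟨i, Nat.lt_of_succ_lt hi⟩
  set b : Fin n := ⟨i + 1, hi⟩
  have hab : (a : ℕ) + 1 = (b : ℕ) := rfl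
  rw [invLength_swap_mul_gt_iff w hab]
  have hca : (tc.trans w).symm a = tc.symm (w⁻¹ a) := rfl
  have hcb : (tc.trans w).symm b = tc.symm (w⁻¹ b) := rfl
  have key : w⁻¹ a < w⁻¹ b ↔ tc ((tc.trans w).symm a) < tc ((tc.trans w).symm b) := by
    rw [hca, hcb, Equiv.apply_symm_apply, Equiv.apply_symm_apply]
  rw [key, htc]
  simp [colOf, rowOf]

end WGTab
end
end

section
/- Let λ be a partition of n and v_λ ∈ W_n the permutation with tab^λ = v_λ · t_λ, where tab^λ is the row-reading standard λ-tableau and t_λ the column-reading standard λ-tableau. Then the set of standard λ-tableaux equals { w·t_λ : w ≤_L v_λ }, i.e. the standard λ-tableaux are exactly the tableaux ≤_L tab^λ in the left weak order transported via t ↦ w where t = w·t_λ. -/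
noncomputable section

namespace WGTab

open Finset in
lemma key_count {n : ℕ} (x y : Equiv.Perm (Fin n)) :
    invLength x + invLength y = invLength (x * y) ↔
      ∀ i j : Fin n, i < j → y j < y i → x (y j) < x (y i) := by
  classical
  set A := univ.filter
    (fun p : Fin n × Fin n => p.1 < p.2 ∧ y p.1 < y p.2 ∧ x (y p.2) < x (y p.1)) with hA
  set B := univ.filter
    (fun p : Fin n × Fin n => p.1 < p.2 ∧ y p.2 < y p.1 ∧ x (y p.1) < x (y p.2)) with hB
  set C := univ.filter
    (fun p : Fin n × Fin n => p.1 < p.2 ∧ y p.2 < y p.1 ∧ x (y p.2) < x (y p.1)) with hC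
  have hy : invLength y = B.card + C.card := by
    rw [invLength, ← card_union_of_disjoint]
    · congr 1
      ext p
      simp only [hB, hC, mem_filter, mem_union, mem_univ, true_and]
      constructor
      · rintro ⟨h1, h2⟩
        have hne : x (y p.2) ≠ x (y p.1) := fun h => ne_of_lt h2 (x.injective h)
        rcases lt_or_gt_of_ne hne with h | h
        · exact Or.inr ⟨h1, h2, h⟩
        · exact Or.inl ⟨h1, h2, h⟩
      · rintro (⟨h1, h2, _⟩ | ⟨h1, h2, _⟩) <;> exact ⟨h1, h2⟩
    · rw [disjoint_left]
      intro p hp hq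
      simp only [hB, hC, mem_filter] at hp hq
      exact absurd hq.2.2.2 (not_lt.2 (le_of_lt hp.2.2.2))
  have hxy : invLength (x * y) = A.card + C.card := by
    rw [invLength, ← card_union_of_disjoint]
    · congr 1
      ext p
      simp only [hA, hC, mem_filter, mem_union, mem_univ, true_and]
      simp only [Equiv.Perm.mul_apply]
      constructor
      · rintro ⟨h1, h2⟩
        have hne : y p.1 ≠ y p.2 := fun h => ne_of_lt h1 (y.injective h)
        rcases lt_or_gt_of_ne hne with h | h
        · exact Or.inl ⟨h1, h, h2⟩
        · exact Or.inr ⟨h1, h, h2⟩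
      · rintro (⟨h1, _, h2⟩ | ⟨h1, _, h2⟩) <;> exact ⟨h1, h2⟩
    · rw [disjoint_left]
      intro p hp hq
      simp only [hA, hC, mem_filter] at hp hq
      exact absurd hq.2.2.1 (not_lt.2 (le_of_lt hp.2.2.1))
  have hx : invLength x = A.card + C.card + B.card - C.card := by
    have hAB : invLength x = A.card + B.card := by
      rw [invLength, ← card_union_of_disjoint]
      · refine card_nbij' (fun q => if y.symm q.1 < y.symm q.2 then (y.symm q.1, y.symm q.2)
            else (y.symm q.2, y.symm q.1))
          (fun p => if y p.1 < y p.2 then (y p.1, y p.2) else (y p.2, y p.1)) ?_ ?_ ?_ ?_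
        · intro q hq
          simp only [mem_coe, mem_filter, mem_univ, true_and] at hq
          dsimp only
          have hne : y.symm q.1 ≠ y.symm q.2 := fun hh => ne_of_lt hq.1 (y.symm.injective hh)
          by_cases h : y.symm q.1 < y.symm q.2
          · rw [if_pos h]
            simp only [mem_coe, hA, hB, mem_union, mem_filter, mem_univ, true_and,
              Equiv.apply_symm_apply]
            exact Or.inl ⟨h, hq.1, hq.2⟩
          · rw [if_neg h]
            have h' : y.symm q.2 < y.symm q.1 := lt_of_le_of_ne (not_lt.1 h) (Ne.symm hne)
            simp only [mem_coe, hA, hB, mem_union, mem_filter, mem_univ, true_and,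
              Equiv.apply_symm_apply]
            exact Or.inr ⟨h', hq.1, hq.2⟩
        · intro p hp
          simp only [mem_coe, hA, hB, mem_union, mem_filter, mem_univ, true_and] at hp
          dsimp only
          rcases hp with ⟨h1, h2, h3⟩ | ⟨h1, h2, h3⟩
          · rw [if_pos h2]
            simp only [mem_coe, mem_filter, mem_univ, true_and]
            exact ⟨h2, h3⟩
          · rw [if_neg (not_lt.2 h2.le)]
            simp only [mem_coe, mem_filter, mem_univ, true_and]
            exact ⟨h2, h3⟩
        · intro q hq
          simp only [mem_coe, mem_filter, mem_univ, true_and] at hq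
          dsimp only
          by_cases h : y.symm q.1 < y.symm q.2
          · rw [if_pos h, if_pos (by simpa using hq.1)]
            simp
          · rw [if_neg h, if_neg (by simpa using not_lt.2 hq.1.le)]
            simp
        · intro p hp
          simp only [mem_coe, hA, hB, mem_union, mem_filter, mem_univ, true_and] at hp
          dsimp only
          rcases hp with ⟨h1, h2, _⟩ | ⟨h1, h2, _⟩
          · rw [if_pos h2, if_pos (by simpa using h1)]
            simp
          · rw [if_neg (not_lt.2 h2.le), if_neg (by simpa using not_lt.2 h1.le)]
            simp
      · rw [disjoint_left]
        intro p hp hq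
        simp only [hA, hB, mem_filter] at hp hq
        exact absurd hq.2.2.1 (not_lt.2 (le_of_lt hp.2.2.1))
    omega
  have hBempty : B = ∅ ↔ ∀ i j : Fin n, i < j → y j < y i → x (y j) < x (y i) := by
    constructor
    · intro hE i j hij hyij
      have : (i, j) ∉ B := by rw [hE]; exact notMem_empty _
      simp only [hB, mem_filter, mem_univ, true_and, not_and, not_lt] at this
      have hle := this hij hyij
      have hne : x (y j) ≠ x (y i) := fun h => by
        have := y.injective (x.injective h); subst this; exact absurd hij (lt_irrefl _)
      exact lt_of_le_of_ne hle hne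
    · intro h
      rw [eq_empty_iff_forall_notMem]
      intro p hp
      simp only [hB, mem_filter, mem_univ, true_and] at hp
      exact absurd (h p.1 p.2 hp.1 hp.2.1) (not_lt.2 (le_of_lt hp.2.2))
  rw [hy, hxy, hx, ← hBempty, ← Finset.card_eq_zero]
  omega

lemma wkle_iff {n : ℕ} (u w : Equiv.Perm (Fin n)) :
    WkLeP u w ↔ ∀ i j : Fin n, i < j → u j < u i → w j < w i := by
  have h := key_count (w * u⁻¹) u
  rw [inv_mul_cancel_right] at h
  rw [WkLeP, h]
  constructor <;> intro h' i j hij huij <;> have := h' i j hij huij <;>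
    simpa [Equiv.Perm.mul_apply, Equiv.Perm.inv_def, Equiv.symm_apply_apply] using this

/-- the standard `λ`-tableaux are exactly the tableaux `w · t_λ` with
`w ≤_L v_λ`, where `tab^λ = v_λ · t_λ`. -/
theorem stmt3 (n : ℕ) (μ : YoungDiagram) (hcard : μ.cells.card = n)
    (tc tr : Cell μ ≃ Fin n) (htc : IsColReading tc) (htr : IsRowReading tr)
    (t : Cell μ ≃ Fin n) :
    IsStdTab t ↔ WkLeP (wOf tc t) (wOf tc tr) := by
  rw [wkle_iff]
  have happ : ∀ (s : Cell μ ≃ Fin n) (i : Fin n), wOf tc s i = s (tc.symm i) := fun s i => rfl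
  have hcell : (∀ i j : Fin n, i < j → wOf tc t j < wOf tc t i → wOf tc tr j < wOf tc tr i)
      ↔ ∀ c c' : Cell μ, tc c < tc c' → t c' < t c → tr c' < tr c := by
    constructor
    · intro h c c' h1 h2
      have := h (tc c) (tc c') h1 (by simpa [happ] using h2)
      simpa [happ] using this
    · intro h i j hij huij
      have := h (tc.symm i) (tc.symm j) (by simpa using hij) (by simpa [happ] using huij)
      simpa [happ] using this
  rw [hcell]
  constructor
  · -- standard → inversion containment
    intro hstd c c' h1 h2
    rw [htc] at h1
    rw [htr]
    rcases h1 with hcol | ⟨hcoleq, hrow⟩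
    · -- col c < col c'
      left
      rcases lt_trichotomy c'.1.1 c.1.1 with h | h | h
      · exact h
      · exact absurd ((hstd c c').1 ⟨h.symm, hcol⟩) (not_lt.2 (le_of_lt h2))
      · -- row c < row c' : use the cell (row c', col c)
        exfalso
        have hmem : (c'.1.1, c.1.2) ∈ μ := by
          apply μ.up_left_mem (le_refl _) (le_of_lt hcol)
          exact c'.2
        set c'' : Cell μ := ⟨(c'.1.1, c.1.2), hmem⟩ with hc''
        have h3 : t c < t c'' := (hstd c c'').2 ⟨rfl, h⟩
        have h4 : t c'' < t c' := (hstd c'' c').1 ⟨rfl, hcol⟩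
        exact absurd (h3.trans h4) (not_lt.2 (le_of_lt h2))
    · -- same column, row c < row c' : contradicts standardness
      exact absurd ((hstd c c').2 ⟨hcoleq, hrow⟩) (not_lt.2 (le_of_lt h2))
  · -- inversion containment → standard
    intro h c c'
    have hne : ∀ (d d' : Cell μ), d.1 ≠ d'.1 → t d ≠ t d' := fun d d' hdd hh =>
      hdd (congrArg Subtype.val (t.injective hh))
    constructor
    · rintro ⟨hroweq, hcol⟩
      by_contra hlt
      have hne' : t c ≠ t c' := hne c c' (fun hh => by
        rw [Prod.ext_iff] at hh; exact absurd hh.2 (ne_of_lt hcol))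
      have h2 : t c' < t c := lt_of_le_of_ne (not_lt.1 hlt) (Ne.symm hne')
      have h1 : tc c < tc c' := (htc c c').2 (Or.inl hcol)
      have := (htr c' c).1 (h _ _ h1 h2)
      omega
    · rintro ⟨hcoleq, hrow⟩
      by_contra hlt
      have hne' : t c ≠ t c' := hne c c' (fun hh => by
        rw [Prod.ext_iff] at hh; exact absurd hh.1 (ne_of_lt hrow))
      have h2 : t c' < t c := lt_of_le_of_ne (not_lt.1 hlt) (Ne.symm hne')
      have h1 : tc c < tc c' := (htc c c').2 (Or.inr ⟨hcoleq, hrow⟩)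
      have := (htr c' c).1 (h _ _ h1 h2)
      omega

end WGTab
end
end

section
/- Let λ be a partition of n. If t is a standard λ-tableau with t ≠ tab^λ, then there exists j ∈ [2,n] with row_t(j−1) > row_t(j) and col_t(j−1) < col_t(j), such that s_{j−1}·t is again a standard λ-tableau and l(s_{j−1}t) > l(t). Consequently tab^λ is the unique maximal standard λ-tableau in the left weak order. -/
noncomputable section

namespace WGTab

section Auxiliary

private lemma swap_lt_swap {n : ℕ} {a b x y : Fin n} (hab : (b : ℕ) = (a : ℕ) + 1)
    (hxy : x < y) (hne : ¬(x = a ∧ y = b)) :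
    Equiv.swap a b x < Equiv.swap a b y := by
  rw [Equiv.swap_apply_def, Equiv.swap_apply_def]
  split_ifs <;> (simp only [Fin.lt_def, Fin.ext_iff, not_and] at *) <;> omega

private lemma invLength_swap_mul {n : ℕ} {a b : Fin n} (hab : (b : ℕ) = (a : ℕ) + 1)
    (w : Equiv.Perm (Fin n)) (h : w⁻¹ a < w⁻¹ b) :
    invLength (Equiv.swap a b * w) = invLength w + 1 := by
  classical
  have hab' : a < b := by rw [Fin.lt_def]; omega
  have hwa : w (w⁻¹ a) = a := w.apply_symm_apply a
  have hwb : w (w⁻¹ b) = b := w.apply_symm_apply b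
  have key : (Finset.univ.filter fun p : Fin n × Fin n =>
        p.1 < p.2 ∧ (Equiv.swap a b * w) p.2 < (Equiv.swap a b * w) p.1)
      = insert (w⁻¹ a, w⁻¹ b)
        (Finset.univ.filter fun p : Fin n × Fin n => p.1 < p.2 ∧ w p.2 < w p.1) := by
    refine Finset.ext fun p => ?_
    rw [Finset.mem_insert, Finset.mem_filter, Finset.mem_filter]
    simp only [Finset.mem_insert, Finset.mem_filter, Finset.mem_univ, true_and,
      Equiv.Perm.mul_apply, Prod.ext_iff]
    constructor
    · rintro ⟨hp, hs⟩
      by_cases hcase : w p.1 = a ∧ w p.2 = b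
      · exact Or.inl ⟨w.injective (hcase.1.trans hwa.symm),
          w.injective (hcase.2.trans hwb.symm)⟩
      · refine Or.inr ⟨hp, ?_⟩
        rcases lt_trichotomy (w p.2) (w p.1) with hlt | heq | hgt
        · exact hlt
        · exact absurd (w.injective heq) (ne_of_gt hp)
        · exact absurd (swap_lt_swap hab hgt hcase) (asymm hs)
    · rintro (⟨h1, h2⟩ | ⟨hp, hw⟩)
      · refine ⟨by rw [h1, h2]; exact h, ?_⟩
        rw [h1, h2, hwa, hwb, Equiv.swap_apply_right, Equiv.swap_apply_left]
        exact hab'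
      · refine ⟨hp, ?_⟩
        apply swap_lt_swap hab hw
        rintro ⟨e1, e2⟩
        have e1' : p.2 = w⁻¹ a := w.injective (e1.trans hwa.symm)
        have e2' : p.1 = w⁻¹ b := w.injective (e2.trans hwb.symm)
        rw [e1', e2'] at hp
        exact absurd h (not_lt.2 hp.le)
  rw [invLength, invLength, key, Finset.card_insert_of_notMem]
  intro hmem
  simp only [Finset.mem_filter, Finset.mem_univ, true_and, hwa, hwb] at hmem
  exact absurd (hmem.2.trans hab') (lt_irrefl _)

private lemma invLength_one {n : ℕ} : invLength (1 : Equiv.Perm (Fin n)) = 0 := by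
  unfold invLength
  rw [Finset.card_eq_zero, Finset.filter_eq_empty_iff]
  rintro p -
  rintro ⟨h1, h2⟩
  simp only [Equiv.Perm.one_apply] at h2
  exact absurd (h1.trans h2) (lt_irrefl _)

private lemma invLength_swap {n : ℕ} {a b : Fin n} (hab : (b : ℕ) = (a : ℕ) + 1) :
    invLength (Equiv.swap a b) = 1 := by
  have h : (1 : Equiv.Perm (Fin n))⁻¹ a < (1 : Equiv.Perm (Fin n))⁻¹ b := by
    simp only [inv_one, Equiv.Perm.one_apply, Fin.lt_def]; omega
  have := invLength_swap_mul hab 1 h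
  rwa [mul_one, invLength_one] at this

private lemma eq_one_of_invLength_eq_zero {n : ℕ} {w : Equiv.Perm (Fin n)}
    (h : invLength w = 0) : w = 1 := by
  unfold invLength at h
  rw [Finset.card_eq_zero, Finset.filter_eq_empty_iff] at h
  have hmono : StrictMono w := by
    intro x y hxy
    have hnot := h (Finset.mem_univ (x, y))
    simp only [not_and] at hnot
    exact lt_of_le_of_ne (not_lt.1 (hnot hxy)) (w.injective.ne hxy.ne)
  have hid : ⇑w = id :=
    (hmono.range_inj strictMono_id).1 (by rw [Set.range_id]; exact w.surjective.range_eq)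
  exact Equiv.ext fun x => congrFun hid x

private lemma std_lt_of_dom {n : ℕ} {μ : YoungDiagram} {t : Cell μ ≃ Fin n}
    (ht : IsStdTab t) {c c' : Cell μ} (h1 : c.1.1 ≤ c'.1.1) (h2 : c.1.2 ≤ c'.1.2)
    (hne : c ≠ c') : t c < t c' := by
  rcases h1.lt_or_eq with hr | hr
  · rcases h2.lt_or_eq with hc | hc
    · have hd : ((c.1.1, c'.1.2) : ℕ × ℕ) ∈ μ := μ.up_left_mem (le_of_lt hr) le_rfl c'.2
      exact lt_trans ((ht c ⟨_, hd⟩).1 ⟨rfl, hc⟩) ((ht ⟨_, hd⟩ c').2 ⟨rfl, hr⟩)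
    · exact (ht c c').2 ⟨hc, hr⟩
  · rcases h2.lt_or_eq with hc | hc
    · exact (ht c c').1 ⟨hr, hc⟩
    · exact absurd (Subtype.ext (Prod.ext hr hc)) hne

private lemma eq_rowReading {n : ℕ} {μ : YoungDiagram} {tr t : Cell μ ≃ Fin n}
    (htr : IsRowReading tr)
    (mono : ∀ c c' : Cell μ,
      (c.1.1 < c'.1.1 ∨ (c.1.1 = c'.1.1 ∧ c.1.2 < c'.1.2)) → t c < t c') :
    t = tr := by
  have hsm : StrictMono (fun x => t (tr.symm x)) := by
    intro x y hxy
    refine mono _ _ ((htr (tr.symm x) (tr.symm y)).1 ?_)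
    rwa [Equiv.apply_symm_apply, Equiv.apply_symm_apply]
  have hid : (fun x => t (tr.symm x)) = id :=
    (hsm.range_inj strictMono_id).1
      (by rw [Set.range_id]; exact (t.surjective.comp tr.symm.surjective).range_eq)
  refine Equiv.ext fun c => ?_
  have := congrFun hid (tr c)
  simpa using this

private lemma descent_pack {n : ℕ} {μ : YoungDiagram} {tc tr t : Cell μ ≃ Fin n}
    (htc : IsColReading tc) (htr : IsRowReading tr) (ht : IsStdTab t) (hne : t ≠ tr) :
    ∃ (i : ℕ) (hi : i + 1 < n),
      rowOf t ⟨i + 1, hi⟩ < rowOf t ⟨i, Nat.lt_of_succ_lt hi⟩ ∧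
      colOf t ⟨i, Nat.lt_of_succ_lt hi⟩ < colOf t ⟨i + 1, hi⟩ ∧
      IsStdTab (t.trans (Equiv.swap ⟨i, Nat.lt_of_succ_lt hi⟩ ⟨i + 1, hi⟩)) ∧
      invLength (Equiv.swap ⟨i, Nat.lt_of_succ_lt hi⟩ ⟨i + 1, hi⟩ * wOf tc t) =
        invLength (wOf tc t) + 1 := by
  have hdesc : ∃ (i : ℕ) (hi : i + 1 < n),
      rowOf t ⟨i + 1, hi⟩ < rowOf t ⟨i, Nat.lt_of_succ_lt hi⟩ := by
    by_contra hcon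
    push_neg at hcon
    apply hne
    apply eq_rowReading htr
    have chain : ∀ (d i : ℕ) (h : i + d < n), rowOf t ⟨i, by omega⟩ ≤ rowOf t ⟨i + d, h⟩ := by
      intro d
      induction d with
      | zero => intro i h; exact le_rfl
      | succ d ih =>
        intro i h
        exact le_trans (ih i (by omega)) (hcon (i + d) h)
    have chain' : ∀ x y : Fin n, x ≤ y → rowOf t x ≤ rowOf t y := by
      intro x y hxy
      have h : (x : ℕ) + ((y : ℕ) - (x : ℕ)) < n := by omega
      have hc := chain ((y : ℕ) - (x : ℕ)) (x : ℕ) h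
      have e : (⟨(x : ℕ) + ((y : ℕ) - (x : ℕ)), h⟩ : Fin n) = y := Fin.ext (by simp; omega)
      rw [e] at hc
      exact hc
    intro c c' hlex
    rcases hlex with hr | ⟨hr, hcl⟩
    · by_contra hnot
      push_neg at hnot
      have hne2 : t c' ≠ t c := fun e =>
        absurd (congrArg (fun z => z.1.1) (t.injective e)) (by omega)
      have hlt : t c' < t c := lt_of_le_of_ne hnot hne2
      have := chain' (t c') (t c) hlt.le
      simp only [rowOf, Equiv.symm_apply_apply] at this
      omega
    · exact (ht c c').1 ⟨hr, hcl⟩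
  obtain ⟨i, hi, hrow⟩ := hdesc
  have hrow' : (t.symm ⟨i + 1, hi⟩).1.1 < (t.symm ⟨i, Nat.lt_of_succ_lt hi⟩).1.1 := hrow
  have hcol : (t.symm ⟨i, Nat.lt_of_succ_lt hi⟩).1.2 < (t.symm ⟨i + 1, hi⟩).1.2 := by
    by_contra hnot
    push_neg at hnot
    set c := t.symm ⟨i, Nat.lt_of_succ_lt hi⟩ with hc
    set c' := t.symm ⟨i + 1, hi⟩ with hc'
    have hd : ((c'.1.1, c.1.2) : ℕ × ℕ) ∈ μ := μ.up_left_mem (le_of_lt hrow') le_rfl c.2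
    have h1 : t ⟨_, hd⟩ < t c := (ht ⟨_, hd⟩ c).2 ⟨rfl, hrow'⟩
    have h2 : t c' ≤ t ⟨_, hd⟩ := by
      rcases lt_or_eq_of_le hnot with hlt | heq
      · exact le_of_lt ((ht c' ⟨_, hd⟩).1 ⟨rfl, hlt⟩)
      · exact le_of_eq (congrArg t (Subtype.ext (Prod.ext rfl heq)))
    have hba : t c' < t c := lt_of_le_of_lt h2 h1
    rw [hc, hc', Equiv.apply_symm_apply, Equiv.apply_symm_apply] at hba
    simp only [Fin.lt_def] at hba
    omega
  refine ⟨i, hi, hrow, hcol, ?_, ?_⟩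
  · intro d d'
    constructor
    · rintro ⟨h1, h2⟩
      simp only [Equiv.trans_apply]
      apply swap_lt_swap rfl ((ht d d').1 ⟨h1, h2⟩)
      rintro ⟨e1, e2⟩
      have ed : d = t.symm ⟨i, Nat.lt_of_succ_lt hi⟩ := by rw [← e1, Equiv.symm_apply_apply]
      have ed' : d' = t.symm ⟨i + 1, hi⟩ := by rw [← e2, Equiv.symm_apply_apply]
      rw [ed, ed'] at h1
      omega
    · rintro ⟨h1, h2⟩
      simp only [Equiv.trans_apply]
      apply swap_lt_swap rfl ((ht d d').2 ⟨h1, h2⟩)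
      rintro ⟨e1, e2⟩
      have ed : d = t.symm ⟨i, Nat.lt_of_succ_lt hi⟩ := by rw [← e1, Equiv.symm_apply_apply]
      have ed' : d' = t.symm ⟨i + 1, hi⟩ := by rw [← e2, Equiv.symm_apply_apply]
      rw [ed, ed'] at h1
      omega
  · apply invLength_swap_mul rfl
    have e1 : (wOf tc t)⁻¹ ⟨i, Nat.lt_of_succ_lt hi⟩
        = tc (t.symm ⟨i, Nat.lt_of_succ_lt hi⟩) := rfl
    have e2 : (wOf tc t)⁻¹ ⟨i + 1, hi⟩ = tc (t.symm ⟨i + 1, hi⟩) := rfl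
    rw [e1, e2]
    exact (htc _ _).2 (Or.inl hcol)

end Auxiliary

/-- every standard tableau `t ≠ tab^λ` admits entries `j-1, j` (0-indexed
`i, i+1`) with `row_t(j-1) > row_t(j)`, `col_t(j-1) < col_t(j)`, such that `s_{j-1} t` is
standard and longer than `t`; consequently `tab^λ` is the unique maximal standard
tableau in the left weak order. -/
theorem stmt4 (n : ℕ) (μ : YoungDiagram) (hcard : μ.cells.card = n)
    (tc tr : Cell μ ≃ Fin n) (htc : IsColReading tc) (htr : IsRowReading tr) :
    (∀ t : Cell μ ≃ Fin n, IsStdTab t → t ≠ tr →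
      ∃ (i : ℕ) (hi : i + 1 < n),
        rowOf t ⟨i + 1, hi⟩ < rowOf t ⟨i, Nat.lt_of_succ_lt hi⟩ ∧
        colOf t ⟨i, Nat.lt_of_succ_lt hi⟩ < colOf t ⟨i + 1, hi⟩ ∧
        IsStdTab (t.trans (Equiv.swap ⟨i, Nat.lt_of_succ_lt hi⟩ ⟨i + 1, hi⟩)) ∧
        invLength (Equiv.swap ⟨i, Nat.lt_of_succ_lt hi⟩ ⟨i + 1, hi⟩ * wOf tc t) >
          invLength (wOf tc t)) ∧
    IsStdTab tr ∧
    (∀ u : Cell μ ≃ Fin n, IsStdTab u → ¬ WkLtP (wOf tc tr) (wOf tc u)) ∧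
    (∀ t : Cell μ ≃ Fin n, IsStdTab t →
      (∀ u : Cell μ ≃ Fin n, IsStdTab u → ¬ WkLtP (wOf tc t) (wOf tc u)) → t = tr) := by
  have htrstd : IsStdTab tr := by
    intro c c'
    exact ⟨fun h => (htr c c').2 (Or.inr h), fun h => (htr c c').2 (Or.inl h.2)⟩
  have len_le : ∀ t : Cell μ ≃ Fin n, IsStdTab t →
      invLength (wOf tc t) ≤ invLength (wOf tc tr) := by
    intro t ht
    unfold invLength
    apply Finset.card_le_card
    rw [Finset.subset_iff]
    intro p hp
    rw [Finset.mem_filter] at hp ⊢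
    simp only [Finset.mem_filter, Finset.mem_univ, true_and, wOf, Equiv.trans_apply] at hp ⊢
    obtain ⟨hp12, hinv⟩ := hp
    set c := tc.symm p.1 with hc
    set c' := tc.symm p.2 with hc'
    have htcc : tc c < tc c' := by
      rw [hc, hc', Equiv.apply_symm_apply, Equiv.apply_symm_apply]; exact hp12
    have hlex := (htc c c').1 htcc
    have hcol : c.1.2 < c'.1.2 := by
      rcases hlex with h | ⟨h1, h2⟩
      · exact h
      · exact absurd ((ht c c').2 ⟨h1, h2⟩) (asymm hinv)
    have hrow : c'.1.1 < c.1.1 := by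
      by_contra hnot
      push_neg at hnot
      have hnecc : c ≠ c' := fun e => absurd (congrArg (fun z => z.1.2) e) (by omega)
      exact absurd (std_lt_of_dom ht hnot hcol.le hnecc) (asymm hinv)
    exact ⟨hp12, (htr c' c).2 (Or.inl hrow)⟩
  refine ⟨?_, htrstd, ?_, ?_⟩
  · intro t ht hne
    obtain ⟨i, hi, h1, h2, h3, h4⟩ := descent_pack htc htr ht hne
    exact ⟨i, hi, h1, h2, h3, by omega⟩
  · rintro u hu ⟨hle, hne⟩
    unfold WkLeP at hle
    rcases Nat.eq_zero_or_pos (invLength (wOf tc u * (wOf tc tr)⁻¹)) with h0 | hpos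
    · have h1 := eq_one_of_invLength_eq_zero h0
      rw [mul_inv_eq_one] at h1
      exact hne h1.symm
    · have := len_le u hu
      omega
  · intro t ht hmax
    by_contra hne
    obtain ⟨i, hi, h1, h2, hstd', hlen⟩ := descent_pack htc htr ht hne
    set a : Fin n := ⟨i, Nat.lt_of_succ_lt hi⟩ with ha
    set b : Fin n := ⟨i + 1, hi⟩ with hb
    apply hmax (t.trans (Equiv.swap a b)) hstd'
    have hw : wOf tc (t.trans (Equiv.swap a b)) = Equiv.swap a b * wOf tc t := rfl
    constructor
    · unfold WkLeP
      rw [hw, mul_inv_cancel_right, hlen, invLength_swap rfl]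
      omega
    · intro e
      rw [hw] at e
      rw [← e] at hlen
      omega


end WGTab
end
end

section
/- Let (W,S) be a Coxeter system, J ⊆ S, and 𝔍 a W-graph ideal with respect to J, with module 𝒮 having basis (b_w : w ∈ 𝔍) and bar involution. Then for each w ∈ 𝔍 there exist coefficients r_{y,w} ∈ ℤ[q,q⁻¹], defined for y ∈ 𝔍 with y < w in Bruhat order, such that b̄_w − b_w = Σ_{y<w} r_{y,w} b_y. -/
open LaurentPolynomial Polynomial

noncomputable section

namespace WGI

/-- The ring `A = ℤ[q,q⁻¹]` of Laurent polynomials. -/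
abbrev A : Type := LaurentPolynomial ℤ

/-- The indeterminate `q`. -/
def Q : A := LaurentPolynomial.T 1

/-- The element `q⁻¹`. -/
def Qi : A := LaurentPolynomial.T (-1)

variable {B W : Type} [Group W] {M : CoxeterMatrix B} (cs : CoxeterSystem M W)

/-- One step of the relation generating the Bruhat order: `w = tu` for a reflection `t`
(or `t = 1`) and `l(u) ≤ l(w)`. -/
def BStep (u w : W) : Prop :=
  cs.length u ≤ cs.length w ∧ ∃ t : W, (cs.IsReflection t ∨ t = 1) ∧ w = t * u

/-- The Bruhat order on `W`: the transitive (and reflexive) closure of `BStep`. -/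
def BrLe (u w : W) : Prop := Relation.ReflTransGen (BStep cs) u w

/-- Strict Bruhat order. -/
def BrLt (u w : W) : Prop := BrLe cs u w ∧ u ≠ w

/-- The left weak order: `u ≤_L w` iff `l(wu⁻¹) = l(w) - l(u)`, i.e. `u` is a suffix of `w`. -/
def WkLe (u w : W) : Prop := cs.length (w * u⁻¹) + cs.length u = cs.length w

/-- Strict left weak order. -/
def WkLt (u w : W) : Prop := WkLe cs u w ∧ u ≠ w

/-- An ideal of `(W, ≤_L)`: a subset closed under taking suffixes. -/
def IsIdealWk (I : Set W) : Prop := ∀ u w : W, WkLe cs u w → w ∈ I → u ∈ I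

/-- The set `D_J` of minimal left coset representatives of `W_J`. -/
def DD (J : Set B) : Set W := { w | ∀ j ∈ J, cs.length w < cs.length (w * cs.simple j) }

/-- Strong ascent: `sw > w` and `sw ∈ I`. -/
def SA (I : Set W) (s : B) (w : W) : Prop :=
  cs.length w < cs.length (cs.simple s * w) ∧ cs.simple s * w ∈ I

/-- Strong descent: `sw < w`. -/
def SD (s : B) (w : W) : Prop := cs.length (cs.simple s * w) < cs.length w

/-- Weak ascent: `sw > w` and `sw ∈ D_J \ I`. -/
def WA (I : Set W) (J : Set B) (s : B) (w : W) : Prop :=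
  cs.length w < cs.length (cs.simple s * w) ∧ cs.simple s * w ∈ DD cs J \ I

/-- Weak descent: `sw > w` and `sw ∉ D_J`. -/
def WD (J : Set B) (s : B) (w : W) : Prop :=
  cs.length w < cs.length (cs.simple s * w) ∧ cs.simple s * w ∉ DD cs J

/-- Descents: strong or weak. -/
def Desc (J : Set B) (s : B) (w : W) : Prop := SD cs s w ∨ WD cs J s w

/-- Ascents: strong or weak. -/
def Asc (I : Set W) (J : Set B) (s : B) (w : W) : Prop := SA cs I s w ∨ WA cs I J s w

/-- The data making the ideal `I` (of the left weak order, contained in `D_J`) a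
`W`-graph ideal with respect to `J`: an `H(W)`-module (a module together with operators
`T s` satisfying the quadratic and braid relations of the Hecke algebra) which is free
over `A` with basis indexed by `I`, on which the generators act by the four-case formula
of Definition 5.2, together with a compatible semilinear bar involution fixing `b₁`. -/
structure WGModule (I : Set W) (J : Set B) where
  V : Type
  [acg : AddCommGroup V]
  [mod : Module A V]
  ideal : IsIdealWk cs I
  subset : I ⊆ DD cs J
  one_mem : (1 : W) ∈ I
  bas : Module.Basis I A V
  T : B → V →ₗ[A] V
  quad : ∀ s : B, (T s) ∘ₗ (T s) = LinearMap.id + (Q - Qi) • T s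
  braid : ∀ s t : B,
    ((CoxeterSystem.alternatingWord s t (M s t)).map fun i => (T i : Module.End A V)).prod =
    ((CoxeterSystem.alternatingWord t s (M s t)).map fun i => (T i : Module.End A V)).prod
  /-- the polynomials `r^s_{y,w}` (divided by `q`, as elements of `ℤ[q]` with zero constant
  term they are recorded in `qℤ[q]` via `r_const`); `r s w y` is `r^s_{y,w}`. -/
  r : B → I → (I →₀ Polynomial ℤ)
  r_const : ∀ (s : B) (w y : I), ((r s w) y).coeff 0 = 0
  r_supp : ∀ (s : B) (w y : I), (r s w) y ≠ 0 → BrLt cs (y : W) (cs.simple s * (w : W))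
  act_SA : ∀ (s : B) (w : I) (h : SA cs I s (w : W)),
    T s (bas w) = bas ⟨cs.simple s * (w : W), h.2⟩
  act_SD : ∀ (s : B) (w : I), SD cs s (w : W) → ∀ h' : cs.simple s * (w : W) ∈ I,
    T s (bas w) = bas ⟨cs.simple s * (w : W), h'⟩ + (Q - Qi) • bas w
  act_WD : ∀ (s : B) (w : I), WD cs J s (w : W) → T s (bas w) = -Qi • bas w
  act_WA : ∀ (s : B) (w : I), WA cs I J s (w : W) →
    T s (bas w) = Q • bas w - (r s w).sum fun y p => (Polynomial.toLaurent p) • bas y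
  bar : V → V
  bar_add : ∀ x y : V, bar (x + y) = bar x + bar y
  bar_smul : ∀ (a : A) (x : V), bar (a • x) = (LaurentPolynomial.invert a) • bar x
  bar_one : bar (bas ⟨(1 : W), one_mem⟩) = bas ⟨(1 : W), one_mem⟩
  bar_T : ∀ (s : B) (x : V), bar (T s x) = T s (bar x) - (Q - Qi) • bar x

attribute [instance] WGModule.acg WGModule.mod

/-- `I` is a `W`-graph ideal with respect to `J`. -/
def IsWGraphIdeal (I : Set W) (J : Set B) : Prop := Nonempty (WGModule cs I J)



section StrongExchange

open CoxeterSystem List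

open scoped Classical

/-- The sign-tracking involution on `W × ZMod 2`. -/
noncomputable def fperm (i : B) : Equiv.Perm (W × ZMod 2) :=
  Function.Involutive.toPerm
    (fun p => (cs.simple i * p.1 * cs.simple i, p.2 + if p.1 = cs.simple i then 1 else 0))
    (by
      intro p
      have h1 : cs.simple i * (cs.simple i * p.1 * cs.simple i) * cs.simple i = p.1 := by
        rw [← mul_assoc, ← mul_assoc, cs.simple_mul_simple_self, one_mul, mul_assoc,
          cs.simple_mul_simple_self, mul_one]
      have h2 : (cs.simple i * p.1 * cs.simple i = cs.simple i) ↔ (p.1 = cs.simple i) := by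
        constructor
        · intro h
          have := congrArg (fun z => cs.simple i * z * cs.simple i) h
          simpa [h1, ← mul_assoc, cs.simple_mul_simple_self] using this
        · intro h; rw [h, cs.simple_mul_simple_self, one_mul]
      ext
      · exact h1
      · simp only [h2]
        have h11 : (1 : ZMod 2) + 1 = 0 := rfl
        by_cases h : p.1 = cs.simple i <;> simp [h, add_assoc, h11])

lemma fperm_apply (i : B) (p : W × ZMod 2) :
    fperm cs i p = (cs.simple i * p.1 * cs.simple i, p.2 + if p.1 = cs.simple i then 1 else 0) :=
  rfl

lemma prod_map_fperm_apply (ω : List B) (t : W) (ε : ZMod 2) :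
    ((ω.map (fperm cs)).prod) (t, ε) =
      (cs.wordProd ω * t * (cs.wordProd ω)⁻¹, ε + ((cs.rightInvSeq ω).count t : ZMod 2)) := by
  induction ω generalizing t ε with
  | nil => simp
  | cons i ω ih =>
      rw [map_cons, prod_cons, cs.wordProd_cons]
      have : (fperm cs i * (ω.map (fperm cs)).prod) (t, ε)
          = fperm cs i ((ω.map (fperm cs)).prod (t, ε)) := rfl
      rw [this, ih, fperm_apply]
      have hcount : (cs.rightInvSeq (i :: ω)).count t
          = (cs.rightInvSeq ω).count t
            + if t = (cs.wordProd ω)⁻¹ * cs.simple i * cs.wordProd ω then 1 else 0 := by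
        show ((((cs.wordProd ω)⁻¹ * cs.simple i * cs.wordProd ω)) :: cs.rightInvSeq ω).count t = _
        rw [List.count_cons]
        simp only [beq_iff_eq]
        by_cases h : t = (cs.wordProd ω)⁻¹ * cs.simple i * cs.wordProd ω
        · rw [if_pos h, if_pos h.symm]
        · rw [if_neg h, if_neg (fun hh => h hh.symm)]
      have hiff : (cs.wordProd ω * t * (cs.wordProd ω)⁻¹ = cs.simple i)
          ↔ (t = (cs.wordProd ω)⁻¹ * cs.simple i * cs.wordProd ω) := by
        constructor
        · intro h; rw [← h]; group
        · intro h; rw [h]; group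
      ext
      · simp [mul_assoc]
      · simp only [hcount, hiff]
        push_cast
        by_cases h : t = (cs.wordProd ω)⁻¹ * cs.simple i * cs.wordProd ω <;> simp [h] <;> ring

private lemma aux_pow (a b : W) (r : ℕ) : a * (b * a) ^ r = (a * b) ^ r * a := by
  induction r with
  | zero => simp
  | succ r ih =>
      calc a * (b * a) ^ (r + 1) = (a * (b * a) ^ r) * (b * a) := by rw [pow_succ, mul_assoc]
        _ = (a * b) ^ r * a * (b * a) := by rw [ih]
        _ = (a * b) ^ (r + 1) * a := by rw [pow_succ]; group

lemma lis_alternatingWord_getD (i i' : B) (n k : ℕ) (h : k < n) :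
    (cs.leftInvSeq (alternatingWord i i' n)).getD k 1 =
      (if Even n then (cs.simple i * cs.simple i') ^ k * cs.simple i
        else (cs.simple i' * cs.simple i) ^ k * cs.simple i') := by
  induction n generalizing i i' k with
  | zero => omega
  | succ m ih =>
      rw [alternatingWord_succ, cs.leftInvSeq_concat]
      rcases Nat.lt_or_ge k m with hk | hk
      · rw [List.concat_eq_append, List.getD_append _ _ _ _ (by simpa using hk), ih i' i k hk]
        rcases Nat.even_or_odd m with hm | hm
        · rw [if_pos hm, if_neg (by rw [Nat.even_add_one]; exact not_not_intro hm)]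
        · rw [if_neg (Nat.not_even_iff_odd.mpr hm),
            if_pos (Nat.even_add_one.mpr (Nat.not_even_iff_odd.mpr hm))]
      · have hk' : k = m := by omega
        subst hk'
        have hlen : (cs.leftInvSeq (alternatingWord i' i k)).length = k := by simp
        rw [List.concat_eq_append, List.getD_append_right _ _ _ _ (by simp), hlen]
        simp only [Nat.sub_self, List.getD_cons_zero]
        rw [cs.prod_alternatingWord_eq_mul_pow]
        set x := cs.simple i with hx
        set y := cs.simple i' with hy
        have hinv : ((y * x) ^ (k / 2))⁻¹ = (x * y) ^ (k / 2) := by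
          rw [← inv_pow, mul_inv_rev, hx, hy, cs.inv_simple, cs.inv_simple]
        rcases Nat.even_or_odd k with hm | hm
        · obtain ⟨r, hr⟩ := hm
          have h2 : k / 2 = r := by omega
          have hme : Even k := ⟨r, hr⟩
          rw [if_pos hme, if_neg (by rw [Nat.even_add_one]; exact not_not_intro hme),
            one_mul, h2]
          rw [h2] at hinv
          calc (y * x) ^ r * y * ((y * x) ^ r)⁻¹
              = (y * x) ^ r * (y * (x * y) ^ r) := by rw [hinv]; group
            _ = (y * x) ^ r * ((y * x) ^ r * y) := by rw [aux_pow]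
            _ = (y * x) ^ (r + r) * y := by rw [pow_add]; group
            _ = (y * x) ^ k * y := by rw [hr]
        · obtain ⟨r, hr⟩ := hm
          have hno : ¬ Even k := Nat.not_even_iff_odd.mpr ⟨r, hr⟩
          have h2 : k / 2 = r := by omega
          rw [if_neg hno, if_pos (Nat.even_add_one.mpr hno), h2]
          rw [h2] at hinv
          calc x * (y * x) ^ r * y * (x * (y * x) ^ r)⁻¹
              = x * ((y * x) ^ r * (y * (x * y) ^ r)) * x := by
                rw [mul_inv_rev, hinv, hx, cs.inv_simple]; group
            _ = x * ((y * x) ^ r * ((y * x) ^ r * y)) * x := by rw [aux_pow]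
            _ = (x * (y * x) ^ (r + r)) * (y * x) := by rw [pow_add]; group
            _ = (x * y) ^ (r + r) * x * (y * x) := by rw [aux_pow]
            _ = (x * y) ^ (r + r + 1) * x := by rw [pow_succ]; group
            _ = (x * y) ^ k * x := by rw [hr, two_mul]

lemma alternatingWord_add_two (i i' : B) (n : ℕ) :
    CoxeterSystem.alternatingWord i i' (n + 2) = CoxeterSystem.alternatingWord i i' n ++ [i, i'] := by
  rw [alternatingWord_succ, alternatingWord_succ]
  simp [List.concat_eq_append, List.append_assoc]

lemma reverse_alternatingWord_even (i i' : B) (m : ℕ) :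
    (CoxeterSystem.alternatingWord i i' (2 * m)).reverse = CoxeterSystem.alternatingWord i' i (2 * m) := by
  induction m with
  | zero => simp [CoxeterSystem.alternatingWord]
  | succ m ih =>
      rw [show 2 * (m + 1) = 2 * m + 2 by ring, alternatingWord_add_two, List.reverse_append, ih]
      rw [show (2 : ℕ) * m + 2 = (2 * m + 1) + 1 by ring, alternatingWord_succ' i' i (2 * m + 1),
        alternatingWord_succ' i' i (2 * m), if_neg (by simp [Nat.even_add_one]),
        if_pos (by simp)]
      rfl

lemma prod_map_fperm_alternatingWord (i i' : B) (m : ℕ) :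
    ((CoxeterSystem.alternatingWord i i' (2 * m)).map (fperm cs)).prod
      = (fperm cs i * fperm cs i') ^ m := by
  induction m with
  | zero => simp [CoxeterSystem.alternatingWord]
  | succ m ih =>
      rw [show 2 * (m + 1) = 2 * m + 2 by ring, alternatingWord_add_two, List.map_append,
        List.prod_append, ih, pow_succ]
      simp [mul_assoc]

lemma count_lis_alternatingWord_even (i i' : B) (m : ℕ)
    (hm : (cs.simple i * cs.simple i') ^ m = 1) (t : W) :
    Even ((cs.leftInvSeq (CoxeterSystem.alternatingWord i i' (2 * m))).count t) := by
  set L := cs.leftInvSeq (CoxeterSystem.alternatingWord i i' (2 * m)) with hL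
  have hlen : L.length = 2 * m := by simp [hL]
  have hdup : L.drop m = L.take m := by
    apply List.ext_getElem
    · rw [List.length_drop, List.length_take, hlen]; omega
    · intro j h1 h2
      have hj : j < m := by
        rw [List.length_take, hlen] at h2; omega
      rw [List.getElem_drop, List.getElem_take]
      have e1 : m + j < L.length := by omega
      have e2 : j < L.length := by omega
      rw [← List.getD_eq_getElem L 1 e1, ← List.getD_eq_getElem L 1 e2]
      rw [hL, lis_alternatingWord_getD cs i i' (2 * m) (m + j) (by omega),
        lis_alternatingWord_getD cs i i' (2 * m) j (by omega)]
      rw [if_pos ⟨m, by ring⟩, if_pos ⟨m, by ring⟩]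
      rw [pow_add, hm, one_mul]
  have hsplit : L = L.take m ++ L.take m := by
    conv_lhs => rw [← List.take_append_drop m L]
    rw [hdup]
  rw [hsplit, List.count_append]
  exact ⟨(L.take m).count t, rfl⟩

lemma fperm_liftable : M.IsLiftable (fperm cs) := by
  intro i i'
  rw [← prod_map_fperm_alternatingWord]
  apply Equiv.ext
  rintro ⟨t, ε⟩
  rw [prod_map_fperm_apply]
  have hπ : cs.wordProd (CoxeterSystem.alternatingWord i i' (2 * M i i')) = 1 := by
    rw [cs.prod_alternatingWord_eq_mul_pow, if_pos ⟨M i i', by ring⟩, one_mul,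
      show 2 * M i i' / 2 = M i i' by omega, cs.simple_mul_simple_pow]
  have hcount : Even ((cs.rightInvSeq (CoxeterSystem.alternatingWord i i' (2 * M i i'))).count t) := by
    have h1 : cs.rightInvSeq (CoxeterSystem.alternatingWord i i' (2 * M i i'))
        = (cs.leftInvSeq (CoxeterSystem.alternatingWord i' i (2 * M i i'))).reverse := by
      rw [← reverse_alternatingWord_even i' i (M i i'), cs.rightInvSeq_reverse]
    rw [h1, List.count_reverse]
    apply count_lis_alternatingWord_even
    rw [M.symmetric i i']
    exact cs.simple_mul_simple_pow i' i
  obtain ⟨c, hc⟩ := hcount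
  rw [hπ, hc]
  have : ((c + c : ℕ) : ZMod 2) = 0 := by
    push_cast; ring_nf; rw [show (2 : ZMod 2) = 0 from rfl, mul_zero]
  simp [this]

/-- The homomorphism tracking inversion parity. -/
noncomputable def theta : W →* Equiv.Perm (W × ZMod 2) := cs.lift ⟨fperm cs, fperm_liftable cs⟩

lemma theta_simple (i : B) : theta cs (cs.simple i) = fperm cs i :=
  cs.lift_apply_simple (fperm_liftable cs) i

lemma theta_wordProd (ω : List B) : theta cs (cs.wordProd ω) = (ω.map (fperm cs)).prod := by
  induction ω with
  | nil => simp [cs.wordProd_nil]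
  | cons i ω ih => rw [cs.wordProd_cons, map_mul, theta_simple, ih, List.map_cons, List.prod_cons]

/-- Inversion parity of the reflection `t` in `w`. -/
noncomputable def nn (w t : W) : ZMod 2 := ((theta cs w) (t, 0)).2

lemma nn_wordProd (ω : List B) (t : W) :
    nn cs (cs.wordProd ω) t = ((cs.rightInvSeq ω).count t : ZMod 2) := by
  unfold nn
  rw [theta_wordProd, prod_map_fperm_apply]
  simp

lemma theta_apply (w t : W) (ε : ZMod 2) :
    theta cs w (t, ε) = (w * t * w⁻¹, ε + nn cs w t) := by
  obtain ⟨ω, rfl⟩ := cs.wordProd_surjective w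
  rw [theta_wordProd, prod_map_fperm_apply, nn_wordProd]

lemma nn_mul (u v t : W) : nn cs (u * v) t = nn cs v t + nn cs u (v * t * v⁻¹) := by
  have h1 : theta cs (u * v) (t, 0) = theta cs u (theta cs v (t, 0)) := by
    rw [map_mul]; rfl
  rw [theta_apply, theta_apply, theta_apply] at h1
  have := congrArg Prod.snd h1
  simpa using this

lemma nn_refl_self {t : W} (ht : cs.IsReflection t) : nn cs t t = 1 := by
  obtain ⟨u, x, rfl⟩ := ht
  have hx : u⁻¹ * (u * cs.simple x * u⁻¹) * u⁻¹⁻¹ = cs.simple x := by group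
  set t := u * cs.simple x * u⁻¹ with hts
  set a := nn cs u⁻¹ t with ha
  set b := nn cs u (cs.simple x) with hb
  have s1 : theta cs u⁻¹ (t, 0) = (cs.simple x, a) := by
    rw [theta_apply, hx, zero_add]
  have s2 : ∀ c : ZMod 2, theta cs u (cs.simple x, c) = (t, c + b) := by
    intro c
    rw [theta_apply, hts]
  have s0 : a + b = 0 := by
    have h1 : theta cs (u * u⁻¹) (t, 0) = (t, 0) := by
      rw [mul_inv_cancel, map_one, Equiv.Perm.one_apply]
    have h2 : theta cs u (theta cs u⁻¹ (t, 0)) = (t, 0) := by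
      rw [← Equiv.Perm.mul_apply, ← map_mul]
      exact h1
    rw [s1, s2] at h2
    exact congrArg Prod.snd h2
  have s3 : theta cs (cs.simple x) (cs.simple x, a) = (cs.simple x, a + 1) := by
    rw [theta_simple, fperm_apply]
    rw [cs.simple_mul_simple_self, one_mul, if_pos rfl]
  have final : theta cs t (t, 0) = (t, a + 1 + b) := by
    have hdecomp : theta cs t = theta cs u * (theta cs (cs.simple x) * theta cs u⁻¹) := by
      rw [← map_mul, ← map_mul, hts]
      congr 1
      group
    rw [hdecomp, Equiv.Perm.mul_apply, Equiv.Perm.mul_apply, s1, s3, s2]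
  unfold nn
  rw [final]
  show a + 1 + b = 1
  rw [show a + 1 + b = 1 + (a + b) by ring, s0, add_zero]

lemma lt_of_nn_eq_one {t : W} (ht : cs.IsReflection t) (w : W) (h : nn cs w t = 1) :
    cs.length (w * t) < cs.length w := by
  obtain ⟨ω, hred, rfl⟩ := cs.exists_reduced_word' w
  rw [nn_wordProd] at h
  have hne : (cs.rightInvSeq ω).count t ≠ 0 := by
    intro h0
    rw [h0] at h
    exact (by decide : ((0 : ℕ) : ZMod 2) ≠ 1) h
  have hmem : t ∈ cs.rightInvSeq ω := by
    by_contra hc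
    exact hne (List.count_eq_zero_of_not_mem hc)
  exact (cs.isRightInversion_of_mem_rightInvSeq hred hmem).2

lemma nn_eq_one_iff {t : W} (ht : cs.IsReflection t) (w : W) :
    nn cs w t = 1 ↔ cs.length (w * t) < cs.length w := by
  constructor
  · exact lt_of_nn_eq_one cs ht w
  · intro h
    by_contra hne
    have h0 : nn cs w t = 0 := by
      have : ∀ z : ZMod 2, z ≠ 1 → z = 0 := by decide
      exact this _ hne
    have htt : t * t * t⁻¹ = t := by
      rw [ht.mul_self, one_mul, ht.inv]
    have hmul : nn cs (w * t) t = 1 := by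
      rw [nn_mul, htt, nn_refl_self cs ht, h0, add_zero]
    have hlt := lt_of_nn_eq_one cs ht (w * t) hmul
    rw [mul_assoc, ht.mul_self, mul_one] at hlt
    omega

lemma right_exchange_mem {t : W} (ht : cs.IsReflection t) {ω : List B}
    (h : cs.length (cs.wordProd ω * t) < cs.length (cs.wordProd ω)) : t ∈ cs.rightInvSeq ω := by
  have h1 : nn cs (cs.wordProd ω) t = 1 := (nn_eq_one_iff cs ht _).mpr h
  rw [nn_wordProd] at h1
  by_contra hmem
  rw [List.count_eq_zero_of_not_mem hmem] at h1
  exact (by decide : ((0 : ℕ) : ZMod 2) ≠ 1) h1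

lemma left_exchange_mem {t : W} (ht : cs.IsReflection t) {ω : List B}
    (h : cs.length (t * cs.wordProd ω) < cs.length (cs.wordProd ω)) : t ∈ cs.leftInvSeq ω := by
  have h2 : cs.length (cs.wordProd ω.reverse * t) < cs.length (cs.wordProd ω.reverse) := by
    rw [cs.wordProd_reverse]
    have e1 : (cs.wordProd ω)⁻¹ * t = (t * cs.wordProd ω)⁻¹ := by
      rw [mul_inv_rev, ht.inv]
    rw [e1, cs.length_inv, cs.length_inv]
    exact h
  have hmem := right_exchange_mem cs ht h2
  rw [cs.rightInvSeq_reverse] at hmem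
  exact List.mem_reverse.mp hmem

/-- Strong exchange property (left version). -/
lemma left_exchange' {t : W} (ht : cs.IsReflection t) {ω : List B}
    (h : cs.length (t * cs.wordProd ω) < cs.length (cs.wordProd ω)) :
    ∃ j < ω.length, t * cs.wordProd ω = cs.wordProd (ω.eraseIdx j) := by
  have hmem := left_exchange_mem cs ht h
  obtain ⟨j, hj, hget⟩ := List.mem_iff_getElem.mp hmem
  have hj' : j < ω.length := by simpa using hj
  refine ⟨j, hj', ?_⟩
  rw [← cs.getD_leftInvSeq_mul_wordProd ω j]
  congr 1
  rw [List.getD_eq_getElem _ 1 hj]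
  exact hget.symm


end StrongExchange

section Bruhat

lemma brle_refl (w : W) : BrLe cs w w := Relation.ReflTransGen.refl

lemma length_le_of_brle {u w : W} (h : BrLe cs u w) : cs.length u ≤ cs.length w := by
  induction h with
  | refl => exact le_refl _
  | tail _ step ih => exact ih.trans step.1

lemma eq_of_brle_of_length_ge {u w : W} (h : BrLe cs u w) (hl : cs.length w ≤ cs.length u) :
    u = w := by
  induction h with
  | refl => rfl
  | @tail b c hub step ih =>
      obtain ⟨hlen, t, hto, rfl⟩ := step
      have hub' := length_le_of_brle cs hub
      rcases hto with htr | rfl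
      · exfalso
        exact htr.length_mul_right_ne b (le_antisymm (hl.trans hub') hlen)
      · rw [one_mul] at hl ⊢
        exact ih (hl.trans (le_refl _))

lemma length_lt_of_brlt {u w : W} (h : BrLt cs u w) : cs.length u < cs.length w := by
  rcases Nat.lt_or_ge (cs.length u) (cs.length w) with h1 | h1
  · exact h1
  · exact absurd (eq_of_brle_of_length_ge cs h.1 h1) h.2

lemma brle_of_lt_simple {v : W} (i : B)
    (h : cs.length v ≤ cs.length (cs.simple i * v)) : BrLe cs v (cs.simple i * v) :=
  Relation.ReflTransGen.single ⟨h, cs.simple i, Or.inl (cs.isReflection_simple i), rfl⟩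

lemma brle_of_gt_simple {v : W} (i : B)
    (h : cs.length (cs.simple i * v) ≤ cs.length v) : BrLe cs (cs.simple i * v) v := by
  refine Relation.ReflTransGen.single ⟨h, cs.simple i, Or.inl (cs.isReflection_simple i), ?_⟩
  rw [cs.simple_mul_simple_cancel_left]

/-- Core single-step case of the lifting property. -/
lemma bstep_lift {v w : W} (i : B) (h : BStep cs v w) :
    BrLe cs (cs.simple i * v) w ∨ BrLe cs (cs.simple i * v) (cs.simple i * w) := by
  obtain ⟨hlen, t, hto, rfl⟩ := h
  rcases hto with htr | rfl
  swap
  · right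
    rw [one_mul]
    exact brle_refl cs _
  by_cases hsv : cs.simple i * v = t * v
  · left
    rw [hsv]
    exact brle_refl cs _
  rcases le_or_gt (cs.length (cs.simple i * v)) (cs.length (cs.simple i * (t * v))) with hle | hgt
  · right
    refine Relation.ReflTransGen.single ⟨hle, cs.simple i * t * (cs.simple i)⁻¹, Or.inl (htr.conj _), ?_⟩
    rw [cs.inv_simple]
    calc cs.simple i * (t * v) = cs.simple i * t * (cs.simple i * (cs.simple i * v)) := by
          rw [cs.simple_mul_simple_cancel_left]; group
      _ = cs.simple i * t * cs.simple i * (cs.simple i * v) := by group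
  rcases le_or_gt (cs.length (cs.simple i * v)) (cs.length v) with hle2 | hgt2
  · left
    exact (brle_of_gt_simple cs i hle2).tail ⟨hlen, t, Or.inl htr, rfl⟩
  · exfalso
    -- lengths
    have htv : cs.length v < cs.length (t * v) :=
      lt_of_le_of_ne hlen (fun hh => htr.length_mul_right_ne v hh.symm)
    have hsiv : cs.length (cs.simple i * v) = cs.length v + 1 := by
      rcases cs.length_simple_mul v i with h1 | h1
      · exact h1
      · omega
    have hstv : cs.length (cs.simple i * (t * v)) + 1 = cs.length (t * v) := by
      rcases cs.length_simple_mul (t * v) i with h1 | h1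
      · omega
      · exact h1
    -- reduced word of s i * (t * v), prepend i
    obtain ⟨ω₀, hω₀len, hω₀⟩ := cs.exists_reduced_word (cs.simple i * (t * v))
    have hπ : cs.wordProd (i :: ω₀) = t * v := by
      rw [cs.wordProd_cons, ← hω₀, cs.simple_mul_simple_cancel_left]
    have httv : cs.length (t * (cs.wordProd (i :: ω₀))) < cs.length (cs.wordProd (i :: ω₀)) := by
      rw [hπ, ← mul_assoc, htr.mul_self, one_mul]
      exact htv
    obtain ⟨j, hj, herase⟩ := left_exchange' cs htr httv
    rw [hπ, ← mul_assoc, htr.mul_self, one_mul] at herase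
    rcases Nat.eq_zero_or_pos j with rfl | hjpos
    · apply hsv
      have hv : v = cs.simple i * (t * v) := by
        conv_lhs => rw [herase]
        rw [List.eraseIdx_cons_zero, ← hω₀]
      calc cs.simple i * v = cs.simple i * (cs.simple i * (t * v)) := by rw [← hv]
        _ = t * v := by rw [cs.simple_mul_simple_cancel_left]
    · obtain ⟨j', rfl⟩ : ∃ j', j = j' + 1 := ⟨j - 1, by omega⟩
      rw [List.eraseIdx_cons_succ, cs.wordProd_cons] at herase
      have hsv2 : cs.simple i * v = cs.wordProd (ω₀.eraseIdx j') := by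
        rw [herase, ← mul_assoc, cs.simple_mul_simple_self, one_mul]
      have hlen2 : cs.length (cs.simple i * v) ≤ ω₀.length - 1 := by
        rw [hsv2]
        have := cs.length_wordProd_le (ω₀.eraseIdx j')
        have hj' : j' < ω₀.length := by
          have : (i :: ω₀).length = ω₀.length + 1 := rfl
          omega
        rw [List.length_eraseIdx] at this
        simpa [hj'] using this
      have hred : cs.length (cs.wordProd ω₀) = ω₀.length := hω₀len
      rw [← hω₀] at hred
      omega

/-- The lifting property of the Bruhat order. -/
lemma brle_lift {u w : W} (i : B) (h : BrLe cs u w) :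
    BrLe cs (cs.simple i * u) w ∨ BrLe cs (cs.simple i * u) (cs.simple i * w) := by
  induction h with
  | refl => right; exact brle_refl cs _
  | @tail b c hub step ih =>
      rcases ih with h1 | h1
      · left
        exact h1.tail step
      · rcases bstep_lift cs i step with h2 | h2
        · left
          exact h1.trans h2
        · right
          exact h1.trans h2

end Bruhat


open scoped Classical


/-- `b̄_w - b_w` is a linear combination of the `b_y` with `y < w`. -/
theorem stmt6 (I : Set W) (J : Set B) (D : WGModule cs I J) (w : I) :
    ∃ f : I →₀ A, (∀ y : I, f y ≠ 0 → BrLt cs (y : W) (w : W)) ∧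
      D.bar (D.bas w) - D.bas w = f.sum fun y a => a • D.bas y := by
  -- first prove span membership by strong induction on length
  have brlt_of_brle : ∀ u v : W, BrLe cs u v → cs.length u < cs.length v → BrLt cs u v := by
    intro u v h hl
    exact ⟨h, fun he => by rw [he] at hl; omega⟩
  have mem_of_desc : ∀ y : W, y ∈ I → ∀ i : B,
      cs.length (cs.simple i * y) < cs.length y → cs.simple i * y ∈ I := by
    intro y hy i hlen
    apply D.ideal (cs.simple i * y) y _ hy
    unfold WkLe
    have h1 : y * (cs.simple i * y)⁻¹ = cs.simple i := by
      rw [mul_inv_rev, cs.inv_simple, ← mul_assoc, mul_inv_cancel, one_mul]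
    rw [h1, cs.length_simple]
    have := cs.length_simple_mul y i
    omega
  have main : ∀ (n : ℕ) (w : I), cs.length (w : W) ≤ n →
      D.bar (D.bas w) - D.bas w ∈
        Submodule.span A (D.bas '' {y : I | BrLt cs (y : W) (w : W)}) := by
    intro n
    induction n with
    | zero =>
        intro w hw
        have h1 : (w : W) = 1 := cs.length_eq_zero_iff.mp (by omega)
        have hw1 : w = (⟨(1 : W), D.one_mem⟩ : I) := Subtype.ext h1
        rw [hw1, D.bar_one, sub_self]
        exact Submodule.zero_mem _
    | succ n ih =>
        intro w hw
        by_cases h1 : (w : W) = 1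
        · have hw1 : w = (⟨(1 : W), D.one_mem⟩ : I) := Subtype.ext h1
          rw [hw1, D.bar_one, sub_self]
          exact Submodule.zero_mem _
        obtain ⟨i, hdesc⟩ := cs.exists_leftDescent_of_ne_one h1
        have hlv : cs.length (cs.simple i * (w : W)) + 1 = cs.length (w : W) := by
          have := cs.length_simple_mul (w : W) i
          unfold CoxeterSystem.IsLeftDescent at hdesc
          omega
        have hvI : cs.simple i * (w : W) ∈ I := mem_of_desc _ w.2 i hdesc
        set v : I := ⟨cs.simple i * (w : W), hvI⟩ with hvdef
        have hvlen : cs.length (v : W) = cs.length (cs.simple i * (w : W)) := rfl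
        have hsv : cs.simple i * (v : W) = (w : W) := by
          show cs.simple i * (cs.simple i * (w : W)) = (w : W)
          rw [cs.simple_mul_simple_cancel_left]
        have hSA : SA cs I i (v : W) := by
          constructor
          · rw [hsv]
            show cs.length (cs.simple i * (w : W)) < cs.length (w : W)
            omega
          · rw [hsv]; exact w.2
        have hbw : D.T i (D.bas v) = D.bas w := by
          rw [D.act_SA i v hSA]
          congr 1
          exact Subtype.ext hsv
        have hIH := ih v (by rw [hvlen]; omega)
        set Sw : Set I := {y : I | BrLt cs (y : W) (w : W)} with hSw
        set Sv : Set I := {y : I | BrLt cs (y : W) (v : W)} with hSv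
        have hvw : BrLt cs (v : W) (w : W) := by
          refine ⟨Relation.ReflTransGen.single ⟨by omega, cs.simple i,
            Or.inl (cs.isReflection_simple i), hsv.symm⟩, ?_⟩
          intro he
          have : cs.length (v : W) = cs.length (w : W) := by rw [he]
          show False
          have : cs.length (cs.simple i * (w : W)) = cs.length (w : W) := this
          omega
        have hsub : Sv ⊆ Sw := by
          intro y hy
          exact brlt_of_brle _ _ (hy.1.trans hvw.1)
            ((length_lt_of_brlt cs hy).trans (length_lt_of_brlt cs hvw))
        have hspan_mono : Submodule.span A (D.bas '' Sv) ≤ Submodule.span A (D.bas '' Sw) :=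
          Submodule.span_mono (Set.image_mono hsub)
        -- generator lemma
        have tgen : ∀ y : I, y ∈ Sv → D.T i (D.bas y) ∈ Submodule.span A (D.bas '' Sw) := by
          intro y hyv
          have hyw : BrLt cs (y : W) (w : W) := hsub hyv
          have hymem : D.bas y ∈ Submodule.span A (D.bas '' Sw) :=
            Submodule.subset_span ⟨y, hyw, rfl⟩
          rcases lt_or_ge (cs.length (cs.simple i * (y : W))) (cs.length (y : W)) with hd | ha
          · -- strong descent
            have hSD : SD cs i (y : W) := hd
            have hyI' : cs.simple i * (y : W) ∈ I := mem_of_desc _ y.2 i hd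
            rw [D.act_SD i y hSD hyI']
            have hmem2 : (⟨cs.simple i * (y : W), hyI'⟩ : I) ∈ Sw := by
              refine brlt_of_brle _ _ ?_ ?_
              · exact (Relation.ReflTransGen.single ⟨le_of_lt hd, cs.simple i,
                  Or.inl (cs.isReflection_simple i), (by rw [cs.simple_mul_simple_cancel_left])⟩).trans hyw.1
              · exact lt_trans hd (length_lt_of_brlt cs hyw)
            exact Submodule.add_mem _ (Submodule.subset_span ⟨_, hmem2, rfl⟩)
              (Submodule.smul_mem _ _ hymem)
          · -- ascent
            have ha' : cs.length (y : W) < cs.length (cs.simple i * (y : W)) :=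
              lt_of_le_of_ne ha (fun he => cs.length_simple_mul_ne (y : W) i he.symm)
            have hsyw : BrLe cs (cs.simple i * (y : W)) (w : W) := by
              rcases brle_lift cs i hyv.1 with h2 | h2
              · exact h2.trans hvw.1
              · rwa [hsv] at h2
            have hsylen : cs.length (cs.simple i * (y : W)) ≤ cs.length (w : W) :=
              length_le_of_brle cs hsyw
            have hsyne : cs.simple i * (y : W) ≠ (w : W) := by
              intro he
              apply hyv.2
              have : (y : W) = (v : W) := by
                rw [hvdef]
                show (y : W) = cs.simple i * (w : W)
                rw [← he, cs.simple_mul_simple_cancel_left]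
              exact this
            have hsylt : BrLt cs (cs.simple i * (y : W)) (w : W) := ⟨hsyw, hsyne⟩
            by_cases hyI : cs.simple i * (y : W) ∈ I
            · -- strong ascent
              rw [D.act_SA i y ⟨ha', hyI⟩]
              exact Submodule.subset_span ⟨⟨cs.simple i * (y : W), hyI⟩, hsylt, rfl⟩
            · by_cases hyD : cs.simple i * (y : W) ∈ DD cs J
              · -- weak ascent
                rw [D.act_WA i y ⟨ha', hyD, hyI⟩]
                apply Submodule.sub_mem _ (Submodule.smul_mem _ _ hymem)
                apply Submodule.finsuppSum_mem
                intro z hz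
                apply Submodule.smul_mem
                have hzlt : BrLt cs (z : W) (cs.simple i * (y : W)) :=
                  D.r_supp i y z hz
                have : BrLt cs (z : W) (w : W) := by
                  refine brlt_of_brle _ _ (hzlt.1.trans hsyw) ?_
                  exact lt_of_lt_of_le (length_lt_of_brlt cs hzlt) hsylen
                exact Submodule.subset_span ⟨z, this, rfl⟩
              · -- weak descent
                rw [D.act_WD i y ⟨ha', hyD⟩]
                exact Submodule.smul_mem _ _ hymem
        -- now assemble
        set e : D.V := D.bar (D.bas v) - D.bas v with he
        have hbarv : D.bar (D.bas v) = e + D.bas v := by rw [he, sub_add_cancel]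
        have hexpr : D.bar (D.bas w) - D.bas w
            = D.T i e - (Q - Qi) • e - (Q - Qi) • D.bas v := by
          have hbarw : D.bar (D.bas w) = D.T i (D.bar (D.bas v)) - (Q - Qi) • D.bar (D.bas v) := by
            rw [← hbw, D.bar_T]
          rw [hbarw, hbarv, map_add, hbw, smul_add]
          abel
        rw [hexpr]
        have hTie : D.T i e ∈ Submodule.span A (D.bas '' Sw) := by
          have h1 : D.T i e ∈ Submodule.map (D.T i) (Submodule.span A (D.bas '' Sv)) :=
            Submodule.mem_map_of_mem hIH
          rw [Submodule.map_span] at h1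
          refine Submodule.span_le.mpr ?_ h1
          rintro _ ⟨_, ⟨y, hy, rfl⟩, rfl⟩
          exact tgen y hy
        refine Submodule.sub_mem _ (Submodule.sub_mem _ hTie
          (Submodule.smul_mem _ _ (hspan_mono hIH))) (Submodule.smul_mem _ _ ?_)
        exact Submodule.subset_span ⟨v, hvw, rfl⟩
  have hmem := main (cs.length (w : W)) w (le_refl _)
  have hsupp := (Module.Basis.mem_span_image D.bas).mp hmem
  refine ⟨D.bas.repr (D.bar (D.bas w) - D.bas w), ?_, ?_⟩
  · intro y hy
    exact hsupp (Finsupp.mem_support_iff.mpr hy)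
  · symm
    rw [← Finsupp.linearCombination_apply]
    exact D.bas.linearCombination_repr _

end WGI
end
end
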